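/- For m = 2 bosonic-anyon modes: (i) the beam-splitter Hamiltonian H = β₁†β₂ + β₂†β₁ maps the two-particle subspace W = span{e₍₂,₀₎, e₍₁,₁₎, e₍₀,₂₎} of the Fock space into itself, and its matrix in the ordered basis (e₍₂,₀₎, e₍₁,₁₎, e₍₀,₂₎) is M = √2·[[0, e^{iφ}, 0], [e^{−iφ}, 0, 1], [0, 1, 0]]; and (ii) the balanced beam splitter acting on the two-particle input produces the anyonic Hong–Ou–Mandel output: exp(i(π/4)·M) applied to the vector (0, 1, 0)ᵀ equals ( i·e^{iφ}/√2, 0, i/√2 )ᵀ. In particular the coincidence outcome |1,1⟩ is completely suppressed for every value of φ. -/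

import Mathlib

open scoped BigOperators

/-- The bosonic-anyon Fock space on `2` modes. -/
abbrev BosonicFock2 := (Fin 2 → ℕ) →₀ ℂ

/-- Bosonic-anyon creation operator `βᵢ†` on two modes. -/
noncomputable def bCreate (φ : ℝ) (i : Fin 2) : BosonicFock2 →ₗ[ℂ] BosonicFock2 :=
  Finsupp.lift _ ℂ _ fun n =>
    (Complex.exp (-(Complex.I * φ) * (∑ k ∈ Finset.univ.filter (fun k => k < i), (n k : ℂ)))
        * (Real.sqrt (n i + 1) : ℝ)) •
      Finsupp.single (Function.update n i (n i + 1)) 1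

/-- Bosonic-anyon annihilation operator `βᵢ` on two modes. -/
noncomputable def bAnnih (φ : ℝ) (i : Fin 2) : BosonicFock2 →ₗ[ℂ] BosonicFock2 :=
  Finsupp.lift _ ℂ _ fun n =>
    (Complex.exp ((Complex.I * φ) * (∑ k ∈ Finset.univ.filter (fun k => k < i), (n k : ℂ)))
        * (Real.sqrt (n i) : ℝ)) •
      Finsupp.single (Function.update n i (n i - 1)) 1

/-- The beam-splitter Hamiltonian `H = β₁†β₂ + β₂†β₁` on two bosonic-anyon modes. -/
noncomputable def bsHamiltonian (φ : ℝ) : BosonicFock2 →ₗ[ℂ] BosonicFock2 :=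
  bCreate φ 0 ∘ₗ bAnnih φ 1 + bCreate φ 1 ∘ₗ bAnnih φ 0

/-- Fock basis vector `e_n` for an occupation pair `n`. -/
noncomputable def fock (n : Fin 2 → ℕ) : BosonicFock2 := Finsupp.single n 1

/-- The matrix of `H` in the ordered basis `(e₍₂,₀₎, e₍₁,₁₎, e₍₀,₂₎)`:
`M = √2·[[0, e^{iφ}, 0], [e^{−iφ}, 0, 1], [0, 1, 0]]`. -/
noncomputable def bsMatrix (φ : ℝ) : Matrix (Fin 3) (Fin 3) ℂ :=
  ((Real.sqrt 2 : ℝ) : ℂ) •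
    !![0, Complex.exp (Complex.I * φ), 0;
       Complex.exp (-(Complex.I * φ)), 0, 1;
       0, 1, 0]


lemma bAnnih_single (φ : ℝ) (i : Fin 2) (n : Fin 2 → ℕ) :
    bAnnih φ i (Finsupp.single n 1) =
      (Complex.exp ((Complex.I * φ) * (∑ k ∈ Finset.univ.filter (fun k => k < i), (n k : ℂ)))
        * (Real.sqrt (n i) : ℝ)) •
      Finsupp.single (Function.update n i (n i - 1)) 1 := by
  simp [bAnnih, Finsupp.lift_apply, Finsupp.sum_single_index]

lemma bCreate_single (φ : ℝ) (i : Fin 2) (n : Fin 2 → ℕ) :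
    bCreate φ i (Finsupp.single n 1) =
      (Complex.exp (-(Complex.I * φ) * (∑ k ∈ Finset.univ.filter (fun k => k < i), (n k : ℂ)))
        * (Real.sqrt (n i + 1) : ℝ)) •
      Finsupp.single (Function.update n i (n i + 1)) 1 := by
  simp [bCreate, Finsupp.lift_apply, Finsupp.sum_single_index]

noncomputable def Pm (φ : ℝ) : Matrix (Fin 3) (Fin 3) ℂ :=
  !![Complex.exp (Complex.I*φ), Complex.exp (Complex.I*φ), Complex.exp (Complex.I*φ);
     ((Real.sqrt 2 : ℝ) : ℂ), 0, -((Real.sqrt 2 : ℝ) : ℂ);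
     1, -1, 1]

noncomputable def Qm (φ : ℝ) : Matrix (Fin 3) (Fin 3) ℂ :=
  !![Complex.exp (-(Complex.I*φ))/4, ((Real.sqrt 2:ℝ):ℂ)/4, 1/4;
     Complex.exp (-(Complex.I*φ))/2, 0, -(1/2);
     Complex.exp (-(Complex.I*φ))/4, -(((Real.sqrt 2:ℝ):ℂ)/4), 1/4]

lemma sqrt2_sq : ((Real.sqrt 2:ℝ):ℂ) * ((Real.sqrt 2:ℝ):ℂ) = 2 := by
  norm_cast
  rw [Real.mul_self_sqrt (by norm_num)]

lemma exp_mul_exp_neg (φ : ℝ) :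
    Complex.exp (Complex.I*φ) * Complex.exp (-(Complex.I*φ)) = 1 := by
  rw [← Complex.exp_add]; ring_nf; exact Complex.exp_zero

lemma PQ (φ : ℝ) : Pm φ * Qm φ = 1 := by
  have h2 := sqrt2_sq
  have he := exp_mul_exp_neg φ
  have h2' : ((Real.sqrt 2:ℝ):ℂ)^2 = 2 := by rw [sq]; exact h2
  ext i j
  fin_cases i <;> fin_cases j <;>
    simp [Pm, Qm, Matrix.mul_apply, Fin.sum_univ_three, Matrix.one_apply,
      ← add_div, ← Complex.exp_add, mul_comm, mul_assoc, mul_left_comm] <;>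
    ring_nf <;>
    simp [← Complex.exp_add] <;>
    first
    | rfl
    | linear_combination h2'/4
    | linear_combination -(h2'/4)
    | linear_combination h2'/2
    | linear_combination -(h2'/2)
    | linear_combination 3*h2'/4
    | linear_combination -(3*h2'/4)
    | linear_combination he/2 + h2'/4
    | linear_combination he/2 - h2'/4
    | linear_combination -(he/2) + h2'/4
    | linear_combination -(he/2) - h2'/4

noncomputable def Dm : Fin 3 → ℂ := ![Complex.I * (Real.pi/2), 0, -(Complex.I * (Real.pi/2))]

lemma diagDm : Matrix.diagonal Dm =
    !![Complex.I * (Real.pi/2), 0, 0; 0, 0, 0; 0, 0, -(Complex.I * (Real.pi/2))] := by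
  ext i j
  fin_cases i <;> fin_cases j <;> simp [Dm, Matrix.diagonal, Matrix.vecHead, Matrix.vecTail]

set_option maxHeartbeats 1000000 in
lemma diag_eq (φ : ℝ) :
    (Complex.I * (Real.pi / 4)) • bsMatrix φ = Pm φ * Matrix.diagonal Dm * Qm φ := by
  have h2' : ((Real.sqrt 2:ℝ):ℂ)^2 = 2 := by
    rw [sq]; exact sqrt2_sq
  have he := exp_mul_exp_neg φ
  rw [diagDm]
  ext i j
  fin_cases i <;> fin_cases j <;>
    simp [Pm, Qm, bsMatrix, Matrix.mul_apply, Fin.sum_univ_three, ← Complex.exp_add] <;>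
    ring_nf <;>
    simp [← Complex.exp_add] <;>
    first
    | rfl
    | linear_combination (Complex.I * Real.pi * ((Real.sqrt 2:ℝ):ℂ) / 8) * h2'
    | linear_combination (-(Complex.I * Real.pi * ((Real.sqrt 2:ℝ):ℂ)) / 8) * h2'
    | linear_combination (Complex.I * Real.pi * Complex.exp (Complex.I*φ) * ((Real.sqrt 2:ℝ):ℂ) / 8) * h2'
    | linear_combination (Complex.I * Real.pi / 4) * he
    | linear_combination (-(Complex.I * Real.pi) / 4) * he

lemma exp_I_pi_div_two : Complex.exp (Complex.I * (Real.pi/2)) = Complex.I := by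
  rw [mul_comm, Complex.exp_mul_I]
  have hc : ((Real.pi : ℂ)/2) = ((Real.pi/2 : ℝ) : ℂ) := by push_cast; ring
  rw [hc, ← Complex.ofReal_cos, ← Complex.ofReal_sin, Real.cos_pi_div_two, Real.sin_pi_div_two]
  simp

lemma expDm : NormedSpace.exp Dm = ![Complex.I, 1, -Complex.I] := by
  rw [Pi.exp_def]
  funext i
  fin_cases i <;>
    simp [Dm, ← Complex.exp_eq_exp_ℂ]
  · exact exp_I_pi_div_two
  · rw [Complex.exp_neg, exp_I_pi_div_two]
    simp [Complex.inv_I]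

lemma exp_eq (φ : ℝ) :
    NormedSpace.exp ((Complex.I * (Real.pi / 4)) • bsMatrix φ)
      = Pm φ * Matrix.diagonal ![Complex.I, 1, -Complex.I] * Qm φ := by
  have hP : IsUnit (Pm φ) := (Matrix.isUnit_iff_isUnit_det _).mpr (Matrix.isUnit_det_of_right_inverse (PQ φ))
  have hQ : (Pm φ)⁻¹ = Qm φ := Matrix.inv_eq_right_inv (PQ φ)
  rw [diag_eq, ← hQ, Matrix.exp_conj (Pm φ) _ hP, Matrix.exp_diagonal, expDm, hQ]

lemma diagDm' : Matrix.diagonal ![Complex.I, 1, -Complex.I] =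
    !![Complex.I, 0, 0; 0, 1, 0; 0, 0, -Complex.I] := by
  ext i j
  fin_cases i <;> fin_cases j <;>
    simp [Matrix.diagonal, Matrix.vecHead, Matrix.vecTail]

lemma final (φ : ℝ) :
    (NormedSpace.exp ((Complex.I * (Real.pi / 4)) • bsMatrix φ)).mulVec ![0, 1, 0]
      = ![Complex.I * Complex.exp (Complex.I * φ) / (Real.sqrt 2 : ℂ), 0,
          Complex.I / (Real.sqrt 2 : ℂ)] := by
  have h2 := sqrt2_sq
  have hne : ((Real.sqrt 2:ℝ):ℂ) ≠ 0 := by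
    intro h
    rw [h] at h2; norm_num at h2
  rw [exp_eq, diagDm']
  funext i
  fin_cases i <;>
    simp [Pm, Qm, Matrix.mulVec, Matrix.mul_apply, dotProduct, Fin.sum_univ_three,
      Matrix.vecHead, Matrix.vecTail] <;>
    field_simp <;>
    first
    | linear_combination (Complex.I * Complex.exp (Complex.I*φ) / 2) * h2
    | linear_combination (-(Complex.I * Complex.exp (Complex.I*φ)) / 2) * h2
    | linear_combination (Complex.I / 2) * h2
    | linear_combination (-Complex.I / 2) * h2
    | linear_combination (2*Complex.I * Complex.exp (Complex.I*φ)) * h2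
    | linear_combination (2*Complex.I) * h2
    | linear_combination 2 * h2
    | ring

lemma ham20 (φ : ℝ) : bsHamiltonian φ (fock ![2, 0])
      = (((Real.sqrt 2 : ℝ) : ℂ) * Complex.exp (-(Complex.I * φ))) • fock ![1, 1] := by
  have h0 : (Finset.univ.filter (fun k : Fin 2 => k < (0 : Fin 2))) = ∅ := by decide
  have h1 : (Finset.univ.filter (fun k : Fin 2 => k < (1 : Fin 2))) = {0} := by decide
  have e : Function.update (Function.update ![2,0] (0:Fin 2) (2-1)) (1:Fin 2) (0+1) = ![1,1] := by
    funext k; fin_cases k <;> rfl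
  simp only [bsHamiltonian, LinearMap.add_apply, LinearMap.comp_apply, fock,
    bAnnih_single, bCreate_single, h0, h1, map_smul]
  norm_num [e]

lemma ham11 (φ : ℝ) : bsHamiltonian φ (fock ![1, 1])
      = (((Real.sqrt 2 : ℝ) : ℂ) * Complex.exp (Complex.I * φ)) • fock ![2, 0]
        + ((Real.sqrt 2 : ℝ) : ℂ) • fock ![0, 2] := by
  have h0 : (Finset.univ.filter (fun k : Fin 2 => k < (0 : Fin 2))) = ∅ := by decide
  have h1 : (Finset.univ.filter (fun k : Fin 2 => k < (1 : Fin 2))) = {0} := by decide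
  have e1 : Function.update (Function.update ![1,1] (1:Fin 2) 0) (0:Fin 2) 2 = ![2,0] := by
    funext k; fin_cases k <;> rfl
  have e2 : Function.update (Function.update ![1,1] (0:Fin 2) 0) (1:Fin 2) 2 = ![0,2] := by
    funext k; fin_cases k <;> rfl
  simp only [bsHamiltonian, LinearMap.add_apply, LinearMap.comp_apply, fock,
    bAnnih_single, bCreate_single, h0, h1, map_smul]
  norm_num [e1, e2]
  rw [mul_comm]

lemma ham02 (φ : ℝ) : bsHamiltonian φ (fock ![0, 2])
      = ((Real.sqrt 2 : ℝ) : ℂ) • fock ![1, 1] := by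
  have h0 : (Finset.univ.filter (fun k : Fin 2 => k < (0 : Fin 2))) = ∅ := by decide
  have h1 : (Finset.univ.filter (fun k : Fin 2 => k < (1 : Fin 2))) = {0} := by decide
  have e : Function.update (Function.update ![0,2] (1:Fin 2) (2-1)) (0:Fin 2) (0+1) = ![1,1] := by
    funext k; fin_cases k <;> rfl
  simp only [bsHamiltonian, LinearMap.add_apply, LinearMap.comp_apply, fock,
    bAnnih_single, bCreate_single, h0, h1, map_smul]
  norm_num [e]

/-- **Anyonic Hong–Ou–Mandel effect for two bosonic-anyon modes.**
(i) The beam-splitter Hamiltonian `H = β₁†β₂ + β₂†β₁` maps the two-particle subspace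
`W = span{e₍₂,₀₎, e₍₁,₁₎, e₍₀,₂₎}` into itself, and its matrix in this ordered basis is
`M = √2·[[0, e^{iφ}, 0], [e^{−iφ}, 0, 1], [0, 1, 0]]`;
(ii) the balanced beam splitter produces the anyonic Hong–Ou–Mandel output:
`exp(i(π/4)·M)·(0,1,0)ᵀ = (i·e^{iφ}/√2, 0, i/√2)ᵀ`, so the coincidence outcome `|1,1⟩`
is completely suppressed for every `φ`. -/
theorem bosonic_anyon_hong_ou_mandel (φ : ℝ) :
    (∀ v ∈ Submodule.span ℂ {fock ![2, 0], fock ![1, 1], fock ![0, 2]},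
        bsHamiltonian φ v ∈
          Submodule.span ℂ {fock ![2, 0], fock ![1, 1], fock ![0, 2]}) ∧
    bsHamiltonian φ (fock ![2, 0])
      = (((Real.sqrt 2 : ℝ) : ℂ) * Complex.exp (-(Complex.I * φ))) • fock ![1, 1] ∧
    bsHamiltonian φ (fock ![1, 1])
      = (((Real.sqrt 2 : ℝ) : ℂ) * Complex.exp (Complex.I * φ)) • fock ![2, 0]
        + ((Real.sqrt 2 : ℝ) : ℂ) • fock ![0, 2] ∧
    bsHamiltonian φ (fock ![0, 2]) = ((Real.sqrt 2 : ℝ) : ℂ) • fock ![1, 1] ∧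
    (NormedSpace.exp ((Complex.I * (Real.pi / 4)) • bsMatrix φ)).mulVec ![0, 1, 0]
      = ![Complex.I * Complex.exp (Complex.I * φ) / (Real.sqrt 2 : ℂ), 0,
          Complex.I / (Real.sqrt 2 : ℂ)] := by
  have m20 : fock ![2,0] ∈ Submodule.span ℂ {fock ![2, 0], fock ![1, 1], fock ![0, 2]} :=
    Submodule.subset_span (by simp)
  have m11 : fock ![1,1] ∈ Submodule.span ℂ {fock ![2, 0], fock ![1, 1], fock ![0, 2]} :=
    Submodule.subset_span (by simp)
  have m02 : fock ![0,2] ∈ Submodule.span ℂ {fock ![2, 0], fock ![1, 1], fock ![0, 2]} :=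
    Submodule.subset_span (by simp)
  refine ⟨?_, ham20 φ, ham11 φ, ham02 φ, final φ⟩
  intro v hv
  induction hv using Submodule.span_induction with
  | mem x hx =>
    rcases hx with rfl | rfl | rfl
    · rw [ham20]; exact Submodule.smul_mem _ _ m11
    · rw [ham11]
      exact Submodule.add_mem _ (Submodule.smul_mem _ _ m20) (Submodule.smul_mem _ _ m02)
    · rw [ham02]; exact Submodule.smul_mem _ _ m11
  | zero => simp
  | add x y _ _ hx hy => rw [map_add]; exact Submodule.add_mem _ hx hy
  | smul c x _ hx => rw [map_smul]; exact Submodule.smul_mem _ _ hx
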